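/- Let m, n be natural numbers and let f : ℝ^m → ℝ^n be an additive function (f(a + b) = f(a) + f(b) for all a, b). If f is Lebesgue measurable, then f is ℝ-linear, i.e. f(c • a) = c • f(a) for all a ∈ ℝ^m and c ∈ ℝ. -/

import Mathlib

set_option maxHeartbeats 1000000

open MeasureTheory Pointwise

theorem linear_of_additive_measurable (m n : ℕ)
    (f : EuclideanSpace ℝ (Fin m) → EuclideanSpace ℝ (Fin n))
    (hadd : ∀ a b, f (a + b) = f a + f b)
    (hmeas : NullMeasurable f (volume : Measure (EuclideanSpace ℝ (Fin m)))) :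
    ∀ (c : ℝ) (a : EuclideanSpace ℝ (Fin m)), f (c • a) = c • f a := by
  set F : EuclideanSpace ℝ (Fin m) →+ EuclideanSpace ℝ (Fin n) := AddMonoidHom.mk' f hadd with hF
  have hf0 : f 0 = 0 := map_zero F
  -- continuity at 0
  have hcont0 : ContinuousAt f 0 := by
    rw [ContinuousAt, hf0, Metric.tendsto_nhds]
    intro ε hε
    -- find a positive measure preimage of a small ball
    obtain ⟨D, hDc, hDd⟩ := TopologicalSpace.exists_countable_dense (EuclideanSpace ℝ (Fin n))
    have hcover : (⋃ d ∈ D, f ⁻¹' Metric.ball d (ε / 2)) = Set.univ := by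
      ext x
      simp only [Set.mem_iUnion, Set.mem_preimage, Set.mem_univ, iff_true]
      obtain ⟨d, hd1, hd2⟩ := (Metric.dense_iff.1 hDd (f x) (ε / 2) (by linarith))
      exact ⟨d, hd2, by rwa [Metric.mem_ball, dist_comm]⟩
    have : ∃ d ∈ D, 0 < volume (f ⁻¹' Metric.ball d (ε / 2)) := by
      by_contra h
      push_neg at h
      have hzero : volume (⋃ d ∈ D, f ⁻¹' Metric.ball d (ε / 2)) = 0 := by
        haveI := hDc.to_subtype
        rw [Set.biUnion_eq_iUnion]
        exact measure_iUnion_null fun i => le_antisymm (h i i.2) zero_le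
      rw [hcover] at hzero
      simpa [hzero] using (MeasureTheory.Measure.measure_univ_pos (μ := (volume : Measure (EuclideanSpace ℝ (Fin m))))).2
        (NeZero.ne _)
    obtain ⟨d, _, hdpos⟩ := this
    set E := f ⁻¹' Metric.ball d (ε / 2) with hE
    have hEnm : NullMeasurableSet E volume := hmeas measurableSet_ball
    obtain ⟨s, hsE, hsm, hsae⟩ := hEnm.exists_measurable_subset_ae_eq
    have hspos : 0 < volume s := by rwa [measure_congr hsae]
    have hnhds : s - s ∈ nhds (0 : EuclideanSpace ℝ (Fin m)) :=
      MeasureTheory.Measure.sub_mem_nhds_zero_of_addHaar_pos volume s hsm hspos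
    filter_upwards [hnhds] with x hx
    obtain ⟨a, ha, b, hb, rfl⟩ := hx
    have hfab : f (a - b) = f a - f b := by
      have := hadd (a - b) b
      rw [sub_add_cancel] at this
      rw [this]; abel
    have ha' : f a ∈ Metric.ball d (ε / 2) := hsE ha
    have hb' : f b ∈ Metric.ball d (ε / 2) := hsE hb
    rw [dist_zero_right, hfab]
    calc ‖f a - f b‖ = dist (f a) (f b) := (dist_eq_norm _ _).symm
      _ ≤ dist (f a) d + dist d (f b) := dist_triangle _ _ _
      _ < ε / 2 + ε / 2 := by
          rw [Metric.mem_ball] at ha' hb'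
          rw [dist_comm d (f b)]
          exact add_lt_add ha' hb'
      _ = ε := by ring
  have hcont : Continuous f := continuous_of_continuousAt_zero F hcont0
  intro c a
  exact map_real_smul F hcont c a
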